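/- (Sufficient decrease) Let f : ℝⁿ → ℝ be convex, differentiable, L-smooth, g : ℝⁿ → ℝ convex, and U symmetric with U ⪰ L·I. If x⁺ = prox_{g,U}(x − U⁻¹∇f(x)), then F(x⁺) ≤ F(x) − (1/2)‖x⁺ − x‖²_U, where F = f + g and ‖z‖²_U = zᵀUz. -/

import Mathlib

noncomputable section

/-- Euclidean dot product on `Fin n → ℝ`. -/
def dot {n : ℕ} (a b : Fin n → ℝ) : ℝ := ∑ i, a i * b i

/-- Squared Euclidean norm. -/
def sqnorm {n : ℕ} (a : Fin n → ℝ) : ℝ := dot a a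

namespace SuffDec

variable {n : ℕ}

lemma dot_eq (a b : Fin n → ℝ) : dot a b = dotProduct a b := rfl

lemma dot_comm (a b : Fin n → ℝ) : dot a b = dot b a := by
  simp [dot, mul_comm]

lemma dot_sub_left (a b c : Fin n → ℝ) : dot (a - b) c = dot a c - dot b c := by
  simp [dot, sub_mul, Finset.sum_sub_distrib]

lemma dot_sub_right (a b c : Fin n → ℝ) : dot a (b - c) = dot a b - dot a c := by
  simp [dot, mul_sub, Finset.sum_sub_distrib]

lemma dot_smul_left (t : ℝ) (a b : Fin n → ℝ) : dot (t • a) b = t * dot a b := by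
  simp [dot, Finset.mul_sum, mul_assoc]

lemma dot_neg_left (a b : Fin n → ℝ) : dot (-a) b = - dot a b := by
  simp [dot, Finset.sum_neg_distrib]

lemma dot_neg_right (a b : Fin n → ℝ) : dot a (-b) = - dot a b := by
  simp [dot, Finset.sum_neg_distrib]

lemma sqnorm_nonneg (a : Fin n → ℝ) : 0 ≤ sqnorm a := by
  unfold sqnorm dot; exact Finset.sum_nonneg fun i _ => mul_self_nonneg _

lemma sqnorm_pos {a : Fin n → ℝ} (ha : a ≠ 0) : 0 < sqnorm a := by
  obtain ⟨i, hi⟩ := Function.ne_iff.1 ha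
  exact Finset.sum_pos' (fun j _ => mul_self_nonneg _)
    ⟨i, Finset.mem_univ i, mul_self_pos.2 hi⟩

lemma sqnorm_smul (t : ℝ) (d : Fin n → ℝ) : sqnorm (t • d) = t ^ 2 * sqnorm d := by
  simp only [sqnorm, dot, Pi.smul_apply, smul_eq_mul, Finset.mul_sum]
  exact Finset.sum_congr rfl fun i _ => by ring

lemma cauchy (a b : Fin n → ℝ) :
    dot a b ≤ Real.sqrt (sqnorm a) * Real.sqrt (sqnorm b) := by
  refine (le_abs_self _).trans ?_
  rw [← Real.sqrt_sq_eq_abs, ← Real.sqrt_mul (sqnorm_nonneg a)]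
  apply Real.sqrt_le_sqrt
  calc (dot a b) ^ 2 ≤ (∑ i, a i ^ 2) * ∑ i, b i ^ 2 :=
        Finset.sum_mul_sq_le_sq_mul_sq Finset.univ a b
    _ = sqnorm a * sqnorm b := by simp [sqnorm, dot, sq]

lemma dot_mulVec_symm {U : Matrix (Fin n) (Fin n) ℝ} (hU : U.IsSymm) (a b : Fin n → ℝ) :
    dot a (U.mulVec b) = dot b (U.mulVec a) := by
  rw [dot_eq, dot_eq, Matrix.dotProduct_mulVec, dotProduct_comm,
    ← Matrix.vecMul_transpose, hU.eq]



lemma descent {n : ℕ} (f : (Fin n → ℝ) → ℝ) (f' : (Fin n → ℝ) → (Fin n → ℝ)) (L : ℝ)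
    (hL : 0 < L)
    (hdiff : ∀ x v, HasDerivAt (fun t : ℝ => f (x + t • v)) (dot (f' x) v) 0)
    (hsmooth : ∀ x y, Real.sqrt (sqnorm (f' x - f' y)) ≤ L * Real.sqrt (sqnorm (x - y)))
    (x d : Fin n → ℝ) :
    f (x + d) ≤ f x + dot (f' x) d + L / 2 * sqnorm d := by
  -- derivative of t ↦ f (x + t • d) at every t
  have hh : ∀ t : ℝ, HasDerivAt (fun u : ℝ => f (x + u • d)) (dot (f' (x + t • d)) d) t := by
    intro t
    have h1 : HasDerivAt (fun s : ℝ => f (x + t • d + s • d)) (dot (f' (x + t • d)) d)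
        (t - t) := by simpa using hdiff (x + t • d) d
    have h2 : HasDerivAt (fun u : ℝ => u - t) 1 t := (hasDerivAt_id t).sub_const t
    have h3 := HasDerivAt.comp (h := fun u : ℝ => u - t) t h1 h2
    have hfun : ((fun s : ℝ => f (x + t • d + s • d)) ∘ (fun u : ℝ => u - t)) =
        fun u : ℝ => f (x + u • d) := by
      funext u
      have : x + t • d + (u - t) • d = x + u • d := by
        rw [sub_smul]; abel
      simp [Function.comp, this]
    rw [hfun] at h3
    simpa using h3
  set q : ℝ → ℝ := fun t => f x + t * dot (f' x) d + L * t ^ 2 * sqnorm d / 2 - f (x + t • d)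
    with hq_def
  have hq : ∀ t : ℝ, HasDerivAt q
      (dot (f' x) d + L * (2 * t) * sqnorm d / 2 - dot (f' (x + t • d)) d) t := by
    intro t
    have ha : HasDerivAt (fun u : ℝ => f x + u * dot (f' x) d + L * u ^ 2 * sqnorm d / 2)
        (dot (f' x) d + L * (2 * t) * sqnorm d / 2) t := by
      have h1 : HasDerivAt (fun u : ℝ => f x + u * dot (f' x) d) (dot (f' x) d) t := by
        exact (hasDerivAt_mul_const (dot (f' x) d)).const_add (f x)
      have h2 : HasDerivAt (fun u : ℝ => L * u ^ 2 * sqnorm d / 2)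
          (L * (2 * t) * sqnorm d / 2) t := by
        have := (((hasDerivAt_pow 2 t).const_mul L).mul_const (sqnorm d)).div_const 2
        simpa using this
      exact h1.add h2
    exact ha.sub (hh t)
  have hderiv_nonneg : ∀ t ∈ Set.Icc (0:ℝ) 1, 0 ≤
      dot (f' x) d + L * (2 * t) * sqnorm d / 2 - dot (f' (x + t • d)) d := by
    intro t ht
    have hkey : dot (f' (x + t • d)) d - dot (f' x) d ≤ L * t * sqnorm d := by
      calc dot (f' (x + t • d)) d - dot (f' x) d = dot (f' (x + t • d) - f' x) d := by
            rw [dot_sub_left]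
        _ ≤ Real.sqrt (sqnorm (f' (x + t • d) - f' x)) * Real.sqrt (sqnorm d) :=
            cauchy _ _
        _ ≤ (L * Real.sqrt (sqnorm (x + t • d - x))) * Real.sqrt (sqnorm d) := by
            apply mul_le_mul_of_nonneg_right (hsmooth _ _) (Real.sqrt_nonneg _)
        _ = L * t * sqnorm d := by
            have h1 : x + t • d - x = t • d := by abel
            have h2 : Real.sqrt (sqnorm (t • d)) = t * Real.sqrt (sqnorm d) := by
              rw [sqnorm_smul, Real.sqrt_mul (sq_nonneg t), Real.sqrt_sq_eq_abs,
                abs_of_nonneg ht.1]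
            rw [h1, h2]
            linear_combination (L * t) * Real.sq_sqrt (sqnorm_nonneg d)
    nlinarith [hkey]
  have hmono := monotoneOn_of_deriv_nonneg (convex_Icc (0:ℝ) 1)
    (fun t _ => ((hq t).differentiableAt.continuousAt).continuousWithinAt)
    (fun t _ => ((hq t).differentiableAt).differentiableWithinAt)
    (fun t ht => by
      rw [(hq t).deriv]
      exact hderiv_nonneg t (interior_subset ht))
  have h01 := hmono (Set.mem_Icc.2 ⟨le_refl 0, zero_le_one⟩)
    (Set.mem_Icc.2 ⟨zero_le_one, le_refl 1⟩) zero_le_one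
  have hq0 : q 0 = 0 := by simp [hq_def]
  have hq1 : q 1 = f x + dot (f' x) d + L * sqnorm d / 2 - f (x + d) := by
    simp [hq_def]
  rw [hq0, hq1] at h01
  linarith

end SuffDec

open SuffDec

theorem sufficient_decrease {n : ℕ} (f g : (Fin n → ℝ) → ℝ)
    (f' : (Fin n → ℝ) → (Fin n → ℝ)) (L : ℝ) (hL : 0 < L)
    (hfconv : ConvexOn ℝ Set.univ f) (hgconv : ConvexOn ℝ Set.univ g)
    (hdiff : ∀ x v, HasDerivAt (fun t : ℝ => f (x + t • v)) (dot (f' x) v) 0)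
    (hsmooth : ∀ x y, Real.sqrt (sqnorm (f' x - f' y)) ≤ L * Real.sqrt (sqnorm (x - y)))
    (U : Matrix (Fin n) (Fin n) ℝ) (hUsymm : U.IsSymm)
    (hUL : (U - L • (1 : Matrix (Fin n) (Fin n) ℝ)).PosSemidef)
    (x xplus : Fin n → ℝ)
    (hxplus : IsMinOn (fun v => g v + (1 / 2) *
        dot ((x - U⁻¹.mulVec (f' x)) - v) (U.mulVec ((x - U⁻¹.mulVec (f' x)) - v)))
      Set.univ xplus) :
    f xplus + g xplus ≤
      (f x + g x) - (1 / 2) * dot (xplus - x) (U.mulVec (xplus - x)) := by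
  set y : Fin n → ℝ := x - U⁻¹.mulVec (f' x) with hy
  set w : Fin n → ℝ := x - xplus with hw
  set d : Fin n → ℝ := xplus - x with hd
  -- U dominates L
  have hUpos : ∀ z : Fin n → ℝ, L * sqnorm z ≤ dot z (U.mulVec z) := by
    intro z
    have h := (Matrix.posSemidef_iff_dotProduct_mulVec.1 hUL).2 z
    have hstar : star z = z := by
      funext i; simp
    rw [hstar, Matrix.sub_mulVec, Matrix.smul_mulVec, Matrix.one_mulVec,
      dotProduct_sub, dotProduct_smul] at h
    have h1 : dotProduct z (U.mulVec z) = dot z (U.mulVec z) := rfl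
    have h2 : dotProduct z z = sqnorm z := rfl
    rw [h1, h2, smul_eq_mul] at h
    linarith
  -- U is positive definite, hence invertible
  have hUherm : U.IsHermitian := by
    rw [Matrix.IsHermitian, Matrix.conjTranspose]
    convert hUsymm.eq using 1; ext i j; simp
  have hUposdef : U.PosDef := by
    refine Matrix.posDef_iff_dotProduct_mulVec.2 ⟨hUherm, fun z hz => ?_⟩
    have h1 := hUpos z
    have h2 : 0 < sqnorm z := sqnorm_pos hz
    have hstar : star z = z := by funext i; simp
    rw [hstar]
    calc (0:ℝ) < L * sqnorm z := by positivity
      _ ≤ dot z (U.mulVec z) := h1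
      _ = dotProduct z (U.mulVec z) := rfl
  have hUinv : ∀ z : Fin n → ℝ, U.mulVec (U⁻¹.mulVec z) = z := by
    intro z
    rw [Matrix.mulVec_mulVec, Matrix.mul_nonsing_inv _
      ((Matrix.isUnit_iff_isUnit_det U).1 hUposdef.isUnit), Matrix.one_mulVec]
  -- U (y - xplus) = U w - f' x
  have hUy : U.mulVec (y - xplus) = U.mulVec w - f' x := by
    rw [hy, hw]
    rw [Matrix.mulVec_sub, Matrix.mulVec_sub, Matrix.mulVec_sub, hUinv]
    abel
  -- abbreviations
  set B : ℝ := dot w (U.mulVec (y - xplus)) with hB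
  set C : ℝ := dot w (U.mulVec w) with hC
  -- prox inequality: for all t ∈ (0,1], 0 ≤ (g x - g xplus - B) + t * (C/2)
  have key : ∀ t : ℝ, t ∈ Set.Ioc (0:ℝ) 1 →
      0 ≤ (g x - g xplus - B) + t * (C / 2) := by
    intro t ht
    have hmin := isMinOn_iff.1 hxplus (xplus + t • w) (Set.mem_univ _)
    have hveq : xplus + t • w = (1 - t) • xplus + t • x := by
      rw [hw]; module
    have hyeq : y - (xplus + t • w) = (y - xplus) - t • w := by abel
    -- quadratic expansion
    have hquad : dot (y - (xplus + t • w)) (U.mulVec (y - (xplus + t • w))) =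
        dot (y - xplus) (U.mulVec (y - xplus)) - 2 * t * B + t ^ 2 * C := by
      rw [hyeq, hB, hC]
      rw [Matrix.mulVec_sub, Matrix.mulVec_smul]
      rw [dot_sub_left, dot_sub_right, dot_sub_right, dot_smul_left, dot_smul_left]
      have hsym : dot (y - xplus) (U.mulVec w) = dot w (U.mulVec (y - xplus)) :=
        dot_mulVec_symm hUsymm _ _
      have hsm : dot (y - xplus) (t • U.mulVec w) = t * dot (y - xplus) (U.mulVec w) := by
        simp [dot, Finset.mul_sum, Pi.smul_apply, smul_eq_mul]
        exact Finset.sum_congr rfl fun i _ => by ring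
      have hsm2 : dot w (t • U.mulVec w) = t * dot w (U.mulVec w) := by
        simp [dot, Finset.mul_sum, Pi.smul_apply, smul_eq_mul]
        exact Finset.sum_congr rfl fun i _ => by ring
      rw [hsm, hsm2, hsym]
      ring
    -- convexity of g
    have hg := hgconv.2 (Set.mem_univ xplus) (Set.mem_univ x)
      (by linarith [ht.2] : (0:ℝ) ≤ 1 - t) ht.1.le (by ring)
    rw [← hveq] at hg
    rw [smul_eq_mul, smul_eq_mul] at hg
    rw [hquad] at hmin
    -- hmin : g xplus + 1/2 * Q ≤ g (xplus + t•w) + 1/2 * (Q - 2tB + t²C)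
    have hstep : 0 ≤ t * ((g x - g xplus - B) + t * (C / 2)) := by nlinarith [hmin, hg]
    nlinarith [hstep, ht.1]
  -- take t → 0⁺ : 0 ≤ g x - g xplus - B
  have hgB : 0 ≤ g x - g xplus - B := by
    by_contra hneg
    push_neg at hneg
    set c : ℝ := g x - g xplus - B with hc
    set k : ℝ := C / 2 with hk
    have hden : (0:ℝ) < |k| + 1 := by positivity
    set t : ℝ := min 1 ((-c) / (|k| + 1)) with htd
    have ht0 : 0 < t := lt_min one_pos (div_pos (by linarith) hden)
    have ht1 : t ≤ 1 := min_le_left _ _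
    have hkey := key t ⟨ht0, ht1⟩
    have h1 : t * (|k| + 1) ≤ -c := by
      rw [← le_div_iff₀ hden]
      exact min_le_right _ _
    have h2 : t * k ≤ t * |k| := mul_le_mul_of_nonneg_left (le_abs_self k) ht0.le
    linarith
  -- descent lemma for f
  have hdesc := SuffDec.descent f f' L hL hdiff hsmooth x d
  have hxd : x + d = xplus := by rw [hd]; abel
  rw [hxd] at hdesc
  -- relate B, C, d
  have hBC : B = C - dot w (f' x) := by
    rw [hB, hUy, dot_sub_right, hC]
  have hwd : w = -d := by rw [hw, hd]; abel
  have hCd : C = dot d (U.mulVec d) := by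
    rw [hC, hwd, Matrix.mulVec_neg, dot_neg_left, dot_neg_right, neg_neg]
  have hdotwd : dot w (f' x) = - dot (f' x) d := by
    rw [hwd, dot_neg_left, dot_comm]
  have hLd := hUpos d
  rw [← hCd] at hLd
  have hsqd : 0 ≤ sqnorm d := sqnorm_nonneg d
  -- combine everything
  have hfinal : f xplus + g xplus ≤ f x + g x - C + L / 2 * sqnorm d := by
    have hgle : g xplus ≤ g x - B := by linarith
    rw [hBC, hdotwd] at hgle
    linarith
  rw [← hCd]
  nlinarith [hfinal, hLd, hL]
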